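/- (Jensen step for J) For a variable-length feedback code on a DMC with positive transition probabilities, for any input distribution induced at time n+1 given Y^n and any auxiliary conditional output distribution of the form P'(y_{n+1}|y^n) obtained by reweighting the message prior on a nonempty list, the concavity and definition of J yield J(I(X_{n+1};Y_{n+1}|Y^n)) ≥ E[ ln( P(Y_{n+1}|Y^n) / P'(Y_{n+1}|Y^n) ) | Y^n ], where P' is the output distribution induced by the tilted message distribution. -/

import Mathlib

open scoped BigOperators

noncomputable section

/-- A probability distribution on a finite set, given as a nonnegative function summing to one. -/
def IsDist {X : Type*} [Fintype X] (p : X → ℝ) : Prop :=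
  (∀ x, 0 ≤ p x) ∧ ∑ x, p x = 1

/-- Kullback–Leibler divergence between two distributions on a finite set. -/
def klDiv {Y : Type*} [Fintype Y] (p q : Y → ℝ) : ℝ :=
  ∑ y, p y * Real.log (p y / q y)

/-- Output distribution induced by input distribution `P` over the channel `W`. -/
def outDist {X Y : Type*} [Fintype X] (W : X → Y → ℝ) (P : X → ℝ) (y : Y) : ℝ :=
  ∑ x, P x * W x y

/-- Mutual information `I(P, W)` of input distribution `P` over channel `W`. -/
def mutInfo {X Y : Type*} [Fintype X] [Fintype Y] (W : X → Y → ℝ) (P : X → ℝ) : ℝ :=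
  ∑ x, P x * klDiv (W x) (outDist W P)

/-- Channel capacity `C = max_P I(P, W)`. -/
def capacity {X Y : Type*} [Fintype X] [Fintype Y] (W : X → Y → ℝ) : ℝ :=
  sSup { c | ∃ P : X → ℝ, IsDist P ∧ c = mutInfo W P }

/-- The two-phase exponent function `J(R)`: the supremum over time-sharing constants
`λ ∈ [0,1]`, input letters `x₁, x₂` and input distributions `P₁, P₂` with
`λ I(P₁,W) + (1-λ) I(P₂,W) ≥ R` of `λ D(Q₁‖W_{x₁}) + (1-λ) D(Q₂‖W_{x₂})`. -/
def Jfun {X Y : Type*} [Fintype X] [Fintype Y] (W : X → Y → ℝ) (R : ℝ) : ℝ :=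
  sSup { v | ∃ (lam : ℝ) (x₁ x₂ : X) (P₁ P₂ : X → ℝ),
      0 ≤ lam ∧ lam ≤ 1 ∧ IsDist P₁ ∧ IsDist P₂ ∧
      R ≤ lam * mutInfo W P₁ + (1 - lam) * mutInfo W P₂ ∧
      v = lam * klDiv (outDist W P₁) (W x₁) + (1 - lam) * klDiv (outDist W P₂) (W x₂) }

/-- Jensen step for `J`: for the input distribution induced at one step of a variable-length
feedback code (prior `p` on messages, deterministic encoder `enc`), and the auxiliary
output distribution `q'` induced by reweighting the message prior on a list `L` of
positive prior probability, concavity of `J`, convexity of the KL divergence and Jensen's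
inequality yield `J(I(X_{n+1}; Y_{n+1}|Y^n)) ≥ E[ln(P(Y_{n+1}|Y^n)/P'(Y_{n+1}|Y^n))|Y^n]`,
i.e. `D(q ‖ q') ≤ J(I(pX, W))`. -/
theorem jensen_step_for_J {X Y Msg : Type*} [Fintype X] [Fintype Y] [Fintype Msg]
    [Nonempty X] [DecidableEq X] [DecidableEq Msg]
    (W : X → Y → ℝ) (hpos : ∀ x y, 0 < W x y) (hrow : ∀ x, ∑ y, W x y = 1)
    (p : Msg → ℝ) (hp : (∀ m, 0 ≤ p m) ∧ ∑ m, p m = 1)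
    (L : Finset Msg) (hL : 0 < ∑ m ∈ L, p m)
    (enc : Msg → X) :
    let p' : Msg → ℝ := fun m => if m ∈ L then p m / ∑ m' ∈ L, p m' else 0
    let q : Y → ℝ := fun y => ∑ m, p m * W (enc m) y
    let q' : Y → ℝ := fun y => ∑ m, p' m * W (enc m) y
    let pX : X → ℝ := fun x => ∑ m ∈ Finset.univ.filter (fun m => enc m = x), p m
    klDiv q q' ≤ Jfun W (mutInfo W pX) := by
  intro p' q q' pX
  obtain ⟨hp0, hp1⟩ := hp
  -- Y is nonempty
  have hY : Nonempty Y := by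
    by_contra h
    rw [not_nonempty_iff] at h
    have := hrow (Classical.arbitrary X)
    simp [Finset.univ_eq_empty] at this
  haveI := hY
  -- a message in L with positive probability
  obtain ⟨m₀, hm₀L, hm₀⟩ : ∃ m ∈ L, 0 < p m := by
    by_contra h
    push_neg at h
    have : ∑ m ∈ L, p m ≤ 0 := Finset.sum_nonpos fun m hm => h m hm
    linarith
  have hp'0 : ∀ m, 0 ≤ p' m := by
    intro m
    simp only [p']
    split
    · exact div_nonneg (hp0 m) hL.le
    · exact le_refl 0
  have hp'1 : ∑ m, p' m = 1 := by
    simp only [p']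
    rw [Finset.sum_ite_mem, Finset.univ_inter, ← Finset.sum_div,
      div_self (ne_of_gt hL)]
  have hp'm₀ : 0 < p' m₀ := by
    simp only [p', if_pos hm₀L]
    exact div_pos hm₀ hL
  have hqpos : ∀ y, 0 < q y := fun y =>
    Finset.sum_pos' (fun m _ => mul_nonneg (hp0 m) (hpos _ y).le)
      ⟨m₀, Finset.mem_univ m₀, mul_pos hm₀ (hpos _ y)⟩
  have hq'pos : ∀ y, 0 < q' y := fun y =>
    Finset.sum_pos' (fun m _ => mul_nonneg (hp'0 m) (hpos _ y).le)
      ⟨m₀, Finset.mem_univ m₀, mul_pos hp'm₀ (hpos _ y)⟩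
  -- regrouping by encoder fibers
  have hregroup : ∀ (w : Msg → ℝ) (y : Y),
      ∑ m, w m * W (enc m) y
        = ∑ x, (∑ m ∈ Finset.univ.filter (fun m => enc m = x), w m) * W x y := by
    intro w y
    rw [← Finset.sum_fiberwise_of_maps_to (fun m _ => Finset.mem_univ (enc m))
      (fun m => w m * W (enc m) y)]
    refine Finset.sum_congr rfl fun x _ => ?_
    rw [Finset.sum_mul]
    refine Finset.sum_congr rfl fun m hm => ?_
    rw [(Finset.mem_filter.mp hm).2]
  set pX' : X → ℝ := fun x => ∑ m ∈ Finset.univ.filter (fun m => enc m = x), p' m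
    with hpX'def
  have hpX'0 : ∀ x, 0 ≤ pX' x := fun x =>
    Finset.sum_nonneg fun m _ => hp'0 m
  have hfibsum : ∀ (w : Msg → ℝ),
      ∑ x, (∑ m ∈ Finset.univ.filter (fun m => enc m = x), w m) = ∑ m, w m :=
    fun w => Finset.sum_fiberwise_of_maps_to (fun m _ => Finset.mem_univ (enc m)) w
  have hpX'1 : ∑ x, pX' x = 1 := by rw [hpX'def, hfibsum, hp'1]
  have hpX0 : ∀ x, 0 ≤ pX x := fun x => Finset.sum_nonneg fun m _ => hp0 m
  have hpX1 : ∑ x, pX x = 1 := by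
    show ∑ x, (∑ m ∈ Finset.univ.filter (fun m => enc m = x), p m) = 1
    rw [hfibsum, hp1]
  have hq'eq : ∀ y, q' y = ∑ x, pX' x * W x y := fun y => hregroup p' y
  have hqeq : q = outDist W pX := by
    funext y
    exact hregroup p y
  -- Jensen for log
  have hjensen : ∀ y, ∑ x, pX' x * Real.log (W x y) ≤ Real.log (q' y) := by
    intro y
    rw [hq'eq y]
    have h := (strictConcaveOn_log_Ioi.concaveOn).le_map_sum
      (t := Finset.univ) (w := pX') (p := fun x => W x y)
      (fun x _ => hpX'0 x) hpX'1 (fun x _ => hpos x y)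
    simpa [smul_eq_mul] using h
  -- step 1: convexity of KL in second argument
  have hlhs : klDiv q q' = ∑ y, q y * (Real.log (q y) - Real.log (q' y)) := by
    refine Finset.sum_congr rfl fun y _ => ?_
    rw [Real.log_div (ne_of_gt (hqpos y)) (ne_of_gt (hq'pos y))]
  have hrhs : ∑ x, pX' x * klDiv q (W x)
      = ∑ y, q y * (Real.log (q y) - ∑ x, pX' x * Real.log (W x y)) := by
    have h1 : ∀ x, pX' x * klDiv q (W x)
        = ∑ y, pX' x * (q y * (Real.log (q y) - Real.log (W x y))) := by
      intro x
      rw [klDiv, Finset.mul_sum]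
      refine Finset.sum_congr rfl fun y _ => ?_
      rw [Real.log_div (ne_of_gt (hqpos y)) (ne_of_gt (hpos x y))]
    calc ∑ x, pX' x * klDiv q (W x)
        = ∑ x, ∑ y, pX' x * (q y * (Real.log (q y) - Real.log (W x y))) :=
          Finset.sum_congr rfl fun x _ => h1 x
      _ = ∑ y, ∑ x, pX' x * (q y * (Real.log (q y) - Real.log (W x y))) :=
          Finset.sum_comm
      _ = ∑ y, q y * (Real.log (q y) - ∑ x, pX' x * Real.log (W x y)) := by
          refine Finset.sum_congr rfl fun y _ => ?_
          have : ∑ x, pX' x * (q y * (Real.log (q y) - Real.log (W x y)))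
              = (∑ x, pX' x) * (q y * Real.log (q y))
                - q y * ∑ x, pX' x * Real.log (W x y) := by
            rw [Finset.sum_mul, Finset.mul_sum, ← Finset.sum_sub_distrib]
            exact Finset.sum_congr rfl fun x _ => by ring
          rw [this, hpX'1]
          ring
  have step1 : klDiv q q' ≤ ∑ x, pX' x * klDiv q (W x) := by
    rw [hlhs, hrhs]
    refine Finset.sum_le_sum fun y _ => ?_
    exact mul_le_mul_of_nonneg_left (sub_le_sub_left (hjensen y) _) (hqpos y).le
  -- step 2: pick the max over x
  obtain ⟨x₀, -, hx₀⟩ := Finset.exists_max_image Finset.univ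
    (fun x => klDiv q (W x)) Finset.univ_nonempty
  have step2 : ∑ x, pX' x * klDiv q (W x) ≤ klDiv q (W x₀) := by
    calc ∑ x, pX' x * klDiv q (W x)
        ≤ ∑ x, pX' x * klDiv q (W x₀) :=
          Finset.sum_le_sum fun x _ =>
            mul_le_mul_of_nonneg_left (hx₀ x (Finset.mem_univ x)) (hpX'0 x)
      _ = klDiv q (W x₀) := by rw [← Finset.sum_mul, hpX'1, one_mul]
  -- the set defining Jfun
  set S := { v | ∃ (lam : ℝ) (x₁ x₂ : X) (P₁ P₂ : X → ℝ),
      0 ≤ lam ∧ lam ≤ 1 ∧ IsDist P₁ ∧ IsDist P₂ ∧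
      mutInfo W pX ≤ lam * mutInfo W P₁ + (1 - lam) * mutInfo W P₂ ∧
      v = lam * klDiv (outDist W P₁) (W x₁)
        + (1 - lam) * klDiv (outDist W P₂) (W x₂) } with hS
  have hmem : klDiv q (W x₀) ∈ S := by
    refine ⟨1, x₀, x₀, pX, pX, zero_le_one, le_refl 1, ⟨hpX0, hpX1⟩, ⟨hpX0, hpX1⟩,
      by ring_nf; exact le_refl _, ?_⟩
    rw [← hqeq]
    ring
  -- boundedness
  set M := (Finset.univ : Finset (X × Y)).sup' Finset.univ_nonempty
    (fun xy => Real.log (1 / W xy.1 xy.2)) with hM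
  have hbound : ∀ (P : X → ℝ), IsDist P → ∀ x, klDiv (outDist W P) (W x) ≤ M := by
    intro P hP x
    have hd0 : ∀ y, 0 ≤ outDist W P y := fun y =>
      Finset.sum_nonneg fun x' _ => mul_nonneg (hP.1 x') (hpos x' y).le
    have hd1 : ∑ y, outDist W P y = 1 := by
      simp only [outDist]
      rw [Finset.sum_comm]
      simp_rw [← Finset.mul_sum, hrow, mul_one]
      exact hP.2
    have hdle1 : ∀ y, outDist W P y ≤ 1 := by
      intro y
      rw [← hd1]
      exact Finset.single_le_sum (fun y' _ => hd0 y') (Finset.mem_univ y)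
    calc klDiv (outDist W P) (W x)
        ≤ ∑ y, outDist W P y * M := by
          refine Finset.sum_le_sum fun y _ => ?_
          rcases eq_or_lt_of_le (hd0 y) with h | h
          · simp [← h]
          · refine mul_le_mul_of_nonneg_left ?_ (hd0 y)
            have h1 : outDist W P y / W x y ≤ 1 / W x y :=
              div_le_div_of_nonneg_right (hdle1 y) (hpos x y).le
            calc Real.log (outDist W P y / W x y)
                ≤ Real.log (1 / W x y) :=
                  (Real.log_le_log_iff (div_pos h (hpos x y))
                    (div_pos one_pos (hpos x y))).mpr h1
              _ ≤ M := by
                  rw [hM]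
                  exact Finset.le_sup' (fun xy : X × Y => Real.log (1 / W xy.1 xy.2)) (Finset.mem_univ (x, y))
      _ = M := by rw [← Finset.sum_mul, hd1, one_mul]
  have hbdd : BddAbove S := by
    refine ⟨M, fun v hv => ?_⟩
    obtain ⟨lam, x₁, x₂, P₁, P₂, h0, h1, hd1, hd2, -, hveq⟩ := hv
    have A := hbound P₁ hd1 x₁
    have B := hbound P₂ hd2 x₂
    have hA := mul_le_mul_of_nonneg_left A h0
    have hB := mul_le_mul_of_nonneg_left B (by linarith : (0:ℝ) ≤ 1 - lam)
    rw [hveq]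
    nlinarith
  calc klDiv q q' ≤ klDiv q (W x₀) := le_trans step1 step2
    _ ≤ Jfun W (mutInfo W pX) := le_csSup hbdd hmem

end
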